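/- Let δ > 0 and d ≥ 1. The value (1/δ) · P_π^{-1} · SM_{(k_x, d)} · P_π · x + P_π^{-1} · u^{(k_x)} is independent of the choice of permutation π sorting x in decreasing order; hence PLSoftMax^δ is a well-defined function ℝ^d → Δ_{d−1}, and moreover it is continuous on ℝ^d. -/

import Mathlib

open Finset
open scoped Classical

/-- The soft-max matrix `SM_{(k,d)}` (1-indexed description): `m_{11} = (k−1)/k`;
`m_{ii} = 1/i` for `2 ≤ i ≤ k`; `m_{i1} = −1/k` for `2 ≤ i ≤ k`;
`m_{ij} = −1/(j(j−1))` for `1 ≤ i < j ≤ k`, `j ≥ 2`; all other entries `0`. -/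
noncomputable def SM (k d : ℕ) : Matrix (Fin d) (Fin d) ℝ :=
  Matrix.of fun i j =>
    if k < (i : ℕ) + 1 ∨ k < (j : ℕ) + 1 then 0
    else if (i : ℕ) + 1 = 1 ∧ (j : ℕ) + 1 = 1 then ((k : ℝ) - 1) / k
    else if (i : ℕ) = (j : ℕ) then 1 / ((i : ℕ) + 1 : ℝ)
    else if (j : ℕ) + 1 = 1 then -1 / (k : ℝ)
    else if (i : ℕ) < (j : ℕ) then
      -1 / ((((j : ℕ) + 1 : ℕ) : ℝ) * (((j : ℕ) + 1 : ℝ) - 1))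
    else 0

/-- The vector `u^{(k)} ∈ ℝ^d`, `u^{(k)}_i = 1/k` for the first `k` coordinates, else `0`. -/
noncomputable def uvec (k d : ℕ) : Fin d → ℝ :=
  fun i => if (i : ℕ) + 1 ≤ k then 1 / (k : ℝ) else 0

/-- The permutation matrix `P_π`, with `1`'s at entries `(i, π(i))`. -/
def permMat (d : ℕ) (π : Equiv.Perm (Fin d)) : Matrix (Fin d) (Fin d) ℝ :=
  Matrix.of fun i j => if j = π i then 1 else 0

/-- `π` is a sorting permutation for `x`, i.e. `x_{π(1)} ≥ x_{π(2)} ≥ ⋯ ≥ x_{π(d)}`. -/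
def Sorts {d : ℕ} (x : Fin d → ℝ) (π : Equiv.Perm (Fin d)) : Prop :=
  ∀ i j : Fin d, i ≤ j → x (π j) ≤ x (π i)

/-- `k_x`: the largest `k ∈ {1,…,d}` with `x_{π(1)} − x_{π(k)} ≤ δ`. -/
noncomputable def kx {d : ℕ} (δ : ℝ) (x : Fin d → ℝ) (π : Equiv.Perm (Fin d)) : ℕ :=
  sSup {k : ℕ | 1 ≤ k ∧ k ≤ d ∧
    ∃ h0 : 0 < d, ∃ h : k - 1 < d, x (π ⟨0, h0⟩) - x (π ⟨k - 1, h⟩) ≤ δ}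

/-- `PLSoftMax^δ(x) = (1/δ)·P_π⁻¹·SM_{(k_x,d)}·P_π·x + P_π⁻¹·u^{(k_x)}`,
computed using the sorting permutation `π` of `x`. -/
noncomputable def PLSoftMax {d : ℕ} (δ : ℝ) (x : Fin d → ℝ)
    (π : Equiv.Perm (Fin d)) : Fin d → ℝ :=
  (1 / δ) • ((permMat d π⁻¹).mulVec
      ((SM (kx δ x π) d).mulVec ((permMat d π).mulVec x)))
    + (permMat d π⁻¹).mulVec (uvec (kx δ x π) d)

namespace PLSAux
variable {d : ℕ}

lemma permMat_mulVec_apply (σ : Equiv.Perm (Fin d)) (v : Fin d → ℝ) (i : Fin d) :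
    (permMat d σ).mulVec v i = v (σ i) := by
  simp [permMat, Matrix.mulVec, dotProduct]

lemma kx_mem {δ : ℝ} (hδ : 0 < δ) (x : Fin d → ℝ) (π : Equiv.Perm (Fin d)) (hd : 0 < d) :
    kx δ x π ∈ {k : ℕ | 1 ≤ k ∧ k ≤ d ∧
      ∃ h0 : 0 < d, ∃ h : k - 1 < d, x (π ⟨0, h0⟩) - x (π ⟨k - 1, h⟩) ≤ δ} := by
  apply Nat.sSup_mem
  · exact ⟨1, le_refl 1, hd, hd, by simpa using hd, by simp [hδ.le]⟩
  · exact ⟨d, fun k hk => hk.2.1⟩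

lemma kx_one_le {δ : ℝ} (hδ : 0 < δ) (x : Fin d → ℝ) (π : Equiv.Perm (Fin d)) (hd : 0 < d) :
    1 ≤ kx δ x π := (kx_mem hδ x π hd).1

lemma kx_le {δ : ℝ} (hδ : 0 < δ) (x : Fin d → ℝ) (π : Equiv.Perm (Fin d)) (hd : 0 < d) :
    kx δ x π ≤ d := (kx_mem hδ x π hd).2.1

lemma ico_ident (v : ℕ → ℝ) (K r : ℕ) (h : r < K) :
    ∑ j ∈ Finset.Ico r K, (v j - v (j + 1)) / ((j : ℝ) + 1)
      = v r / ((r : ℝ) + 1) - v K / (K : ℝ)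
        - ∑ j ∈ Finset.Ioo r K, v j / (((j : ℝ) + 1) * (j : ℝ)) := by
  induction K, h using Nat.le_induction with
  | base =>
      have h1 : Finset.Ico r (r + 1) = {r} := by
        ext m; simp only [Finset.mem_Ico, Finset.mem_singleton]; omega
      have h2 : Finset.Ioo r (r + 1) = ∅ := by
        ext m; simp only [Finset.mem_Ioo, Finset.notMem_empty, iff_false]; omega
      rw [h1, h2]
      simp only [Finset.sum_singleton, Finset.sum_empty]
      push_cast
      have : (r : ℝ) + 1 ≠ 0 := by positivity
      field_simp
      try ring
  | succ K hK ih =>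
      rw [Finset.sum_Ico_succ_top (by omega : r ≤ K), ih]
      have h3 : Finset.Ioo r (K + 1) = insert K (Finset.Ioo r K) := by
        ext m; simp only [Finset.mem_Ioo, Finset.mem_insert]; omega
      rw [h3, Finset.sum_insert (by simp)]
      have hK0 : (K : ℝ) ≠ 0 := by
        have : 0 < K := by omega
        positivity
      have hK1 : (K : ℝ) + 1 ≠ 0 := by positivity
      push_cast
      field_simp
      try ring

noncomputable def Yfun {d : ℕ} (hd : 0 < d) (K : ℕ) (δ : ℝ) (x : Fin d → ℝ)
    (π : Equiv.Perm (Fin d)) (j : ℕ) : ℝ :=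
  if h : j < K ∧ j < d then x (π ⟨j, h.2⟩) else x (π ⟨0, hd⟩) - δ

lemma plsoftmax_rank {δ : ℝ} (hδ : 0 < δ) {x : Fin d → ℝ} {π : Equiv.Perm (Fin d)}
    (hd : 0 < d) (r : Fin d) :
    PLSoftMax δ x π (π r) =
      (1 / δ) * ∑ j ∈ Finset.Ico (r : ℕ) (kx δ x π),
        (Yfun hd (kx δ x π) δ x π j - Yfun hd (kx δ x π) δ x π (j + 1)) / ((j : ℝ) + 1) := by
  have hδ0 : δ ≠ 0 := ne_of_gt hδ
  set K := kx δ x π with hKdef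
  have hK1 : 1 ≤ K := kx_one_le hδ x π hd
  have hKd : K ≤ d := kx_le hδ x π hd
  have unf : PLSoftMax δ x π (π r)
      = (1 / δ) * ((SM K d).mulVec (fun j => x (π j)) r) + uvec K d r := by
    have hperm : (permMat d π).mulVec x = fun j => x (π j) :=
      funext fun j => permMat_mulVec_apply π x j
    simp only [PLSoftMax, Pi.add_apply, Pi.smul_apply, smul_eq_mul, hperm, ← hKdef]
    rw [permMat_mulVec_apply, permMat_mulVec_apply]
    simp only [Equiv.Perm.inv_def, Equiv.symm_apply_apply]
  rw [unf]
  have hmv0 : (SM K d).mulVec (fun j => x (π j)) r = ∑ j : Fin d, SM K d r j * x (π j) := rfl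
  rcases lt_or_ge (r : ℕ) K with hr | hr
  · -- main case
    rw [ico_ident (Yfun hd K δ x π) K (r : ℕ) hr]
    have hrd : (r : ℕ) < d := r.isLt
    have hYr : Yfun hd K δ x π (r : ℕ) = x (π r) := by
      rw [Yfun, dif_pos ⟨hr, hrd⟩]
    have hYK : Yfun hd K δ x π K = x (π ⟨0, hd⟩) - δ := by
      rw [Yfun, dif_neg (by omega)]
    set g : ℕ → ℝ := fun m => if h : m < d then SM K d r ⟨m, h⟩ * x (π ⟨m, h⟩) else 0 with hg
    have hsum1 : ∑ j : Fin d, SM K d r j * x (π j) = ∑ m ∈ Finset.range d, g m := by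
      rw [← Fin.sum_univ_eq_sum_range]
      refine Finset.sum_congr rfl fun j _ => ?_
      rw [hg]
      simp only [j.isLt, dif_pos, Fin.eta]
    have hgIoo : ∀ m ∈ Finset.Ioo (r : ℕ) K,
        g m = -(Yfun hd K δ x π m / (((m : ℝ) + 1) * (m : ℝ))) := by
      intro m hm
      simp only [Finset.mem_Ioo] at hm
      have hmd : m < d := by omega
      simp only [hg]
      rw [dif_pos hmd, Yfun, dif_pos ⟨hm.2, hmd⟩]
      have hSM : SM K d r ⟨m, hmd⟩ = -1 / (((m : ℝ) + 1) * (m : ℝ)) := by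
        simp only [SM, Matrix.of_apply, Fin.val_mk]
        rw [if_neg (by omega), if_neg (by omega), if_neg (by omega), if_neg (by omega),
          if_pos (by omega : (r : ℕ) < m)]
        push_cast
        ring_nf
      rw [hSM]
      ring
    have huv : uvec K d r = 1 / (K : ℝ) := by
      simp only [uvec]
      rw [if_pos (by omega)]
    rw [hmv0, hsum1, huv, hYr, hYK]
    by_cases hr0 : (r : ℕ) = 0
    · have hsub : insert (0 : ℕ) (Finset.Ioo (r : ℕ) K) ⊆ Finset.range d := by
        intro m hm
        simp only [Finset.mem_insert, Finset.mem_Ioo] at hm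
        rw [Finset.mem_range]
        rcases hm with h | h
        · omega
        · omega
      have hout : ∀ m ∈ Finset.range d, m ∉ insert (0 : ℕ) (Finset.Ioo (r : ℕ) K) → g m = 0 := by
        intro m hm hnot
        simp only [Finset.mem_insert, Finset.mem_Ioo, not_or, not_and] at hnot
        have hmd : m < d := Finset.mem_range.1 hm
        simp only [hg]
        rw [dif_pos hmd]
        have : SM K d r ⟨m, hmd⟩ = 0 := by
          simp only [SM, Matrix.of_apply, Fin.val_mk]
          rw [if_pos (by omega)]
        rw [this, zero_mul]
      rw [← Finset.sum_subset hsub hout, Finset.sum_insert (by simp [hr0])]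
      have hg0 : g 0 = ((K : ℝ) - 1) / K * x (π ⟨0, hd⟩) := by
        simp only [hg]
        rw [dif_pos hd]
        have : SM K d r ⟨0, hd⟩ = ((K : ℝ) - 1) / K := by
          simp only [SM, Matrix.of_apply, Fin.val_mk]
          rw [if_neg (by omega), if_pos ⟨by omega, trivial⟩]
        rw [this]
      rw [hg0, Finset.sum_congr rfl hgIoo, Finset.sum_neg_distrib]
      have hKne : (K : ℝ) ≠ 0 := by
        have : 0 < K := hK1
        positivity
      set T := ∑ m ∈ Finset.Ioo (r : ℕ) K, Yfun hd K δ x π m / (((m : ℝ) + 1) * (m : ℝ)) with hT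
      have hxr : x (π r) = x (π ⟨0, hd⟩) := by
        congr 1
        congr 1
        exact Fin.ext hr0
      rw [hxr, hr0]
      push_cast
      field_simp
      ring
    · have h0lt : (0 : ℕ) < (r : ℕ) := by omega
      have hsub : insert (0 : ℕ) (insert (r : ℕ) (Finset.Ioo (r : ℕ) K)) ⊆ Finset.range d := by
        intro m hm
        simp only [Finset.mem_insert, Finset.mem_Ioo] at hm
        rw [Finset.mem_range]
        rcases hm with h | h | h
        · omega
        · omega
        · omega
      have hout : ∀ m ∈ Finset.range d,
          m ∉ insert (0 : ℕ) (insert (r : ℕ) (Finset.Ioo (r : ℕ) K)) → g m = 0 := by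
        intro m hm hnot
        simp only [Finset.mem_insert, Finset.mem_Ioo, not_or, not_and] at hnot
        have hmd : m < d := Finset.mem_range.1 hm
        simp only [hg]
        rw [dif_pos hmd]
        have : SM K d r ⟨m, hmd⟩ = 0 := by
          simp only [SM, Matrix.of_apply, Fin.val_mk]
          by_cases hmK : K ≤ m
          · rw [if_pos (by omega)]
          · rw [if_neg (by omega), if_neg (by omega), if_neg (by omega), if_neg (by omega),
              if_neg (by omega)]
        rw [this, zero_mul]
      rw [← Finset.sum_subset hsub hout,
        Finset.sum_insert (by simp only [Finset.mem_insert, Finset.mem_Ioo]; omega),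
        Finset.sum_insert (by simp only [Finset.mem_Ioo]; omega)]
      have hg0 : g 0 = -1 / K * x (π ⟨0, hd⟩) := by
        simp only [hg]
        rw [dif_pos hd]
        have : SM K d r ⟨0, hd⟩ = -1 / K := by
          simp only [SM, Matrix.of_apply, Fin.val_mk]
          rw [if_neg (by omega), if_neg (by omega), if_neg (by omega)]
          simp
        rw [this]
      have hgr : g (r : ℕ) = 1 / ((r : ℝ) + 1) * x (π r) := by
        simp only [hg]
        rw [dif_pos hrd]
        have : SM K d r ⟨(r : ℕ), hrd⟩ = 1 / ((r : ℝ) + 1) := by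
          simp only [SM, Matrix.of_apply, Fin.val_mk]
          rw [if_neg (by omega), if_neg (by omega)]
          simp
        rw [this]
      rw [hg0, hgr, Finset.sum_congr rfl hgIoo, Finset.sum_neg_distrib]
      have hKne : (K : ℝ) ≠ 0 := by
        have : 0 < K := hK1
        positivity
      have hrne : ((r : ℕ) : ℝ) + 1 ≠ 0 := by positivity
      set T := ∑ m ∈ Finset.Ioo (r : ℕ) K, Yfun hd K δ x π m / (((m : ℝ) + 1) * (m : ℝ)) with hT
      field_simp
      ring
  · -- zero case
    have hIco : Finset.Ico (r : ℕ) K = ∅ := Finset.Ico_eq_empty (by omega)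
    have hzero : (SM K d).mulVec (fun j => x (π j)) r = 0 := by
      rw [hmv0]
      apply Finset.sum_eq_zero
      intro j _
      have : SM K d r j = 0 := by
        simp only [SM, Matrix.of_apply]
        rw [if_pos (Or.inl (by omega))]
      rw [this, zero_mul]
    have huv : uvec K d r = 0 := by
      simp only [uvec]
      rw [if_neg (by omega)]
    rw [hzero, huv, hIco]
    simp

lemma kx_close {δ : ℝ} (hδ : 0 < δ) (x : Fin d → ℝ) (π : Equiv.Perm (Fin d)) (hd : 0 < d)
    (h : kx δ x π - 1 < d) :
    x (π ⟨0, hd⟩) - x (π ⟨kx δ x π - 1, h⟩) ≤ δ := by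
  obtain ⟨-, -, h0, hlt, hle⟩ := kx_mem hδ x π hd
  exact hle

lemma kx_max {δ : ℝ} (hδ : 0 < δ) (x : Fin d → ℝ) (π : Equiv.Perm (Fin d)) (hd : 0 < d)
    (h : kx δ x π < d) :
    δ < x (π ⟨0, hd⟩) - x (π ⟨kx δ x π, h⟩) := by
  by_contra hc
  push_neg at hc
  have hmem : kx δ x π + 1 ∈ {k : ℕ | 1 ≤ k ∧ k ≤ d ∧
      ∃ h0 : 0 < d, ∃ h : k - 1 < d, x (π ⟨0, h0⟩) - x (π ⟨k - 1, h⟩) ≤ δ} := by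
    refine ⟨by omega, by omega, hd, by omega, ?_⟩
    simpa using hc
  have : kx δ x π + 1 ≤ kx δ x π :=
    le_csSup ⟨d, fun k hk => hk.2.1⟩ hmem
  omega

noncomputable def ordStat (x : Fin d → ℝ) (j : Fin d) : ℝ :=
  (Finset.univ.powersetCard ((j : ℕ) + 1)).attach.sup'
    (Finset.attach_nonempty_iff.2 (Finset.powersetCard_nonempty.2
      (by simp only [Finset.card_univ, Fintype.card_fin]; exact j.2)))
    fun S => S.1.inf' (Finset.card_pos.1 (by
      rw [(Finset.mem_powersetCard.1 S.2).2]; exact Nat.succ_pos _)) x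

lemma continuous_ordStat (j : Fin d) : Continuous fun x : Fin d → ℝ => ordStat x j :=
  Continuous.finset_sup'_apply _ fun S _ =>
    Continuous.finset_inf'_apply _ fun i _ => continuous_apply i

lemma ord_eq {x : Fin d → ℝ} {π : Equiv.Perm (Fin d)} (hs : Sorts x π) (j : Fin d) :
    ordStat x j = x (π j) := by
  apply le_antisymm
  · apply Finset.sup'_le
    intro S _
    have hcard : S.1.card = (j : ℕ) + 1 := (Finset.mem_powersetCard.1 S.2).2
    have hex : ∃ a ∈ S.1, j ≤ π.symm a := by
      by_contra hcon
      push_neg at hcon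
      have hsub : S.1.image (fun a => ((π.symm a : Fin d) : ℕ)) ⊆ Finset.range (j : ℕ) := by
        intro m hm
        simp only [Finset.mem_image] at hm
        obtain ⟨a, ha, rfl⟩ := hm
        exact Finset.mem_range.2 (Fin.lt_def.1 (hcon a ha))
      have hinj : Function.Injective (fun a : Fin d => ((π.symm a : Fin d) : ℕ)) :=
        fun a b hab => π.symm.injective (Fin.val_injective hab)
      have hle := Finset.card_le_card hsub
      rw [Finset.card_image_of_injective _ hinj, hcard, Finset.card_range] at hle
      omega
    obtain ⟨a, ha, hja⟩ := hex
    calc S.1.inf' _ x ≤ x a := Finset.inf'_le _ ha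
    _ = x (π (π.symm a)) := by rw [Equiv.apply_symm_apply]
    _ ≤ x (π j) := hs j (π.symm a) hja
  · refine Finset.le_sup'_of_le _ (Finset.mem_attach _ ⟨(Finset.Iic j).image π, ?_⟩) ?_
    · rw [Finset.mem_powersetCard]
      exact ⟨Finset.subset_univ _, by
        rw [Finset.card_image_of_injective _ π.injective, Fin.card_Iic]⟩
    · apply Finset.le_inf'
      intro a ha
      simp only [Finset.mem_image, Finset.mem_Iic] at ha
      obtain ⟨b, hb, rfl⟩ := ha
      exact hs b j hb

noncomputable def Wfun {d : ℕ} (hd : 0 < d) (δ : ℝ) (x : Fin d → ℝ) (j : ℕ) : ℝ :=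
  if h : j < d then max (ordStat x ⟨j, h⟩) (ordStat x ⟨0, hd⟩ - δ)
  else ordStat x ⟨0, hd⟩ - δ

noncomputable def Ffun {d : ℕ} (hd : 0 < d) (δ : ℝ) (x : Fin d → ℝ) (i : Fin d) : ℝ :=
  (1 / δ) * ∑ j ∈ Finset.range d,
    (min (max (x i) (ordStat x ⟨0, hd⟩ - δ)) (Wfun hd δ x j)
      - min (max (x i) (ordStat x ⟨0, hd⟩ - δ)) (Wfun hd δ x (j + 1))) / ((j : ℝ) + 1)

lemma sorted_ge {δ : ℝ} (hδ : 0 < δ) {x : Fin d → ℝ} {π : Equiv.Perm (Fin d)} (hd : 0 < d)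
    (hs : Sorts x π) {j : ℕ} (hjK : j < kx δ x π) (hjd : j < d) :
    x (π ⟨0, hd⟩) - δ ≤ x (π ⟨j, hjd⟩) := by
  have hK1 := kx_one_le hδ x π hd
  have hKd := kx_le hδ x π hd
  have h1 : kx δ x π - 1 < d := by omega
  have h2 := kx_close hδ x π hd h1
  have h3 : x (π ⟨kx δ x π - 1, h1⟩) ≤ x (π ⟨j, hjd⟩) :=
    hs ⟨j, hjd⟩ ⟨kx δ x π - 1, h1⟩ (by rw [Fin.mk_le_mk]; omega)
  linarith

lemma sorted_le {δ : ℝ} (hδ : 0 < δ) {x : Fin d → ℝ} {π : Equiv.Perm (Fin d)} (hd : 0 < d)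
    (hs : Sorts x π) {j : ℕ} (hjK : kx δ x π ≤ j) (hjd : j < d) :
    x (π ⟨j, hjd⟩) ≤ x (π ⟨0, hd⟩) - δ := by
  have hKd : kx δ x π < d := by omega
  have h2 := kx_max hδ x π hd hKd
  have h3 : x (π ⟨j, hjd⟩) ≤ x (π ⟨kx δ x π, hKd⟩) :=
    hs ⟨kx δ x π, hKd⟩ ⟨j, hjd⟩ (by rw [Fin.mk_le_mk]; omega)
  linarith

lemma min_c_W {δ : ℝ} (hδ : 0 < δ) {x : Fin d → ℝ} {π : Equiv.Perm (Fin d)} (hd : 0 < d)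
    (hs : Sorts x π) (r : Fin d) (j : ℕ) (hj : j ≤ d) :
    min (max (x (π r)) (ordStat x ⟨0, hd⟩ - δ)) (Wfun hd δ x j)
      = Yfun hd (kx δ x π) δ x π (max (r : ℕ) j) := by
  set K := kx δ x π with hKdef
  have hK1 : 1 ≤ K := kx_one_le hδ x π hd
  have hKd : K ≤ d := kx_le hδ x π hd
  have hord0 : ordStat x ⟨0, hd⟩ = x (π ⟨0, hd⟩) := ord_eq hs _
  have hxr : x (π r) = x (π ⟨(r : ℕ), r.isLt⟩) := by simp
  by_cases hjd : j < d
  · rw [Wfun, dif_pos hjd, hord0, show ordStat x ⟨j, hjd⟩ = x (π ⟨j, hjd⟩) from ord_eq hs _]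
    by_cases hjK : j < K
    · rw [max_eq_left (sorted_ge hδ hd hs hjK hjd)]
      by_cases hrK : (r : ℕ) < K
      · rw [hxr, max_eq_left (sorted_ge hδ hd hs hrK r.isLt)]
        rcases le_total ((r : ℕ)) j with hrj | hjr
        · rw [min_eq_right (hs ⟨(r : ℕ), r.isLt⟩ ⟨j, hjd⟩ (by rw [Fin.mk_le_mk]; omega)),
            show (r : ℕ) ⊔ j = j from max_eq_right hrj, Yfun, dif_pos ⟨hjK, hjd⟩]
        · rw [min_eq_left (hs ⟨j, hjd⟩ ⟨(r : ℕ), r.isLt⟩ (by rw [Fin.mk_le_mk]; omega)),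
            show (r : ℕ) ⊔ j = (r : ℕ) from max_eq_left hjr, Yfun, dif_pos ⟨hrK, r.isLt⟩]
      · rw [hxr, max_eq_right (sorted_le hδ hd hs (by omega) r.isLt),
          min_eq_left (sorted_ge hδ hd hs hjK hjd), Yfun, dif_neg (by omega)]
    · rw [max_eq_right (sorted_le hδ hd hs (by omega) hjd),
        min_eq_right (le_max_right _ _), Yfun, dif_neg (by omega)]
  · rw [Wfun, dif_neg hjd, hord0, min_eq_right (le_max_right _ _), Yfun,
      dif_neg (by omega)]

lemma plsoftmax_eq_F {δ : ℝ} (hδ : 0 < δ) {x : Fin d → ℝ} {π : Equiv.Perm (Fin d)}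
    (hd : 0 < d) (hs : Sorts x π) :
    PLSoftMax δ x π = Ffun hd δ x := by
  funext i
  obtain ⟨r, rfl⟩ : ∃ r, π r = i := ⟨π.symm i, Equiv.apply_symm_apply π i⟩
  rw [plsoftmax_rank hδ hd r, Ffun]
  set K := kx δ x π with hKdef
  have hK1 : 1 ≤ K := kx_one_le hδ x π hd
  have hKd : K ≤ d := kx_le hδ x π hd
  congr 1
  have hterm : ∀ j ∈ Finset.range d,
      (min (max (x (π r)) (ordStat x ⟨0, hd⟩ - δ)) (Wfun hd δ x j)
        - min (max (x (π r)) (ordStat x ⟨0, hd⟩ - δ)) (Wfun hd δ x (j + 1))) / ((j : ℝ) + 1)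
      = (Yfun hd K δ x π (max (r : ℕ) j) - Yfun hd K δ x π (max (r : ℕ) (j + 1))) / ((j : ℝ) + 1) := by
    intro j hj
    have hjd := Finset.mem_range.1 hj
    rw [min_c_W hδ hd hs r j (by omega), min_c_W hδ hd hs r (j + 1) (by omega)]
  rw [Finset.sum_congr rfl hterm]
  have hsub : Finset.Ico (r : ℕ) K ⊆ Finset.range d := by
    intro m hm
    simp only [Finset.mem_Ico] at hm
    rw [Finset.mem_range]
    omega
  have hzero : ∀ j ∈ Finset.range d, j ∉ Finset.Ico (r : ℕ) K →
      (Yfun hd K δ x π (max (r : ℕ) j) - Yfun hd K δ x π (max (r : ℕ) (j + 1))) / ((j : ℝ) + 1) = 0 := by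
    intro j hj hnot
    simp only [Finset.mem_Ico, not_and, not_lt] at hnot
    rcases lt_or_ge j (r : ℕ) with hlt | hge
    · have h1 : max (r : ℕ) j = (r : ℕ) := by omega
      have h2 : max (r : ℕ) (j + 1) = (r : ℕ) := by omega
      rw [h1, h2, sub_self, zero_div]
    · have hKj : K ≤ j := hnot hge
      have h1 : Yfun hd K δ x π (max (r : ℕ) j) = x (π ⟨0, hd⟩) - δ := by
        rw [Yfun, dif_neg (by omega)]
      have h2 : Yfun hd K δ x π (max (r : ℕ) (j + 1)) = x (π ⟨0, hd⟩) - δ := by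
        rw [Yfun, dif_neg (by omega)]
      rw [h1, h2, sub_self, zero_div]
  rw [← Finset.sum_subset hsub hzero]
  apply Finset.sum_congr rfl
  intro j hj
  simp only [Finset.mem_Ico] at hj
  have h1 : max (r : ℕ) j = j := by omega
  have h2 : max (r : ℕ) (j + 1) = j + 1 := by omega
  rw [h1, h2]

lemma continuous_Wfun (hd : 0 < d) (δ : ℝ) (j : ℕ) :
    Continuous fun x : Fin d → ℝ => Wfun hd δ x j := by
  by_cases h : j < d
  · have he : (fun x : Fin d → ℝ => Wfun hd δ x j)
        = fun x => max (ordStat x ⟨j, h⟩) (ordStat x ⟨0, hd⟩ - δ) := by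
      funext x
      rw [Wfun, dif_pos h]
    rw [he]
    exact (continuous_ordStat _).max ((continuous_ordStat _).sub continuous_const)
  · have he : (fun x : Fin d → ℝ => Wfun hd δ x j)
        = fun x => ordStat x ⟨0, hd⟩ - δ := by
      funext x
      rw [Wfun, dif_neg h]
    rw [he]
    exact (continuous_ordStat _).sub continuous_const

lemma continuous_F (hd : 0 < d) (δ : ℝ) : Continuous fun x : Fin d → ℝ => Ffun hd δ x := by
  apply continuous_pi
  intro i
  simp only [Ffun]
  apply Continuous.mul continuous_const
  apply continuous_finset_sum
  intro j _
  apply Continuous.div_const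
  apply Continuous.sub
  · exact Continuous.min
      ((continuous_apply i).max ((continuous_ordStat _).sub continuous_const))
      (continuous_Wfun hd δ j)
  · exact Continuous.min
      ((continuous_apply i).max ((continuous_ordStat _).sub continuous_const))
      (continuous_Wfun hd δ (j + 1))

lemma plsoftmax_nonneg {δ : ℝ} (hδ : 0 < δ) {x : Fin d → ℝ} {π : Equiv.Perm (Fin d)}
    (hd : 0 < d) (hs : Sorts x π) (i : Fin d) :
    0 ≤ PLSoftMax δ x π i := by
  obtain ⟨r, rfl⟩ : ∃ r, π r = i := ⟨π.symm i, Equiv.apply_symm_apply π i⟩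
  rw [plsoftmax_rank hδ hd r]
  apply mul_nonneg (by positivity)
  apply Finset.sum_nonneg
  intro j hj
  simp only [Finset.mem_Ico] at hj
  apply div_nonneg _ (by positivity)
  rw [sub_nonneg]
  have hKd : kx δ x π ≤ d := kx_le hδ x π hd
  have hjd : j < d := by omega
  have e1 : Yfun hd (kx δ x π) δ x π j = x (π ⟨j, hjd⟩) := by
    rw [Yfun, dif_pos ⟨hj.2, hjd⟩]
  by_cases hj1 : j + 1 < kx δ x π
  · have hj1d : j + 1 < d := by omega
    have e2 : Yfun hd (kx δ x π) δ x π (j + 1) = x (π ⟨j + 1, hj1d⟩) := by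
      rw [Yfun, dif_pos ⟨hj1, hj1d⟩]
    rw [e1, e2]
    exact hs ⟨j, hjd⟩ ⟨j + 1, hj1d⟩ (by rw [Fin.mk_le_mk]; omega)
  · have e2 : Yfun hd (kx δ x π) δ x π (j + 1) = x (π ⟨0, hd⟩) - δ := by
      rw [Yfun, dif_neg (by omega)]
    rw [e1, e2]
    exact sorted_ge hδ hd hs hj.2 hjd

lemma plsoftmax_sum {δ : ℝ} (hδ : 0 < δ) {x : Fin d → ℝ} {π : Equiv.Perm (Fin d)}
    (hd : 0 < d) :
    ∑ i, PLSoftMax δ x π i = 1 := by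
  have hδ0 : δ ≠ 0 := ne_of_gt hδ
  set K := kx δ x π with hKdef
  have hK1 : 1 ≤ K := kx_one_le hδ x π hd
  have hKd : K ≤ d := kx_le hδ x π hd
  set Y : ℕ → ℝ := Yfun hd K δ x π with hY
  set t : ℕ → ℝ := fun j => (Y j - Y (j + 1)) / ((j : ℝ) + 1) with ht
  rw [← Equiv.sum_comp π (PLSoftMax δ x π)]
  rw [Finset.sum_congr rfl (fun r _ => plsoftmax_rank hδ hd r)]
  have step1 : ∑ r : Fin d, (1 / δ) * ∑ j ∈ Finset.Ico (r : ℕ) K, t j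
      = (1 / δ) * ∑ m ∈ Finset.range d, ∑ j ∈ Finset.Ico m K, t j := by
    rw [← Finset.mul_sum]
    congr 1
    exact Fin.sum_univ_eq_sum_range (fun m => ∑ j ∈ Finset.Ico m K, t j) d
  rw [step1]
  have hsub : Finset.range K ⊆ Finset.range d := by
    intro m hm
    rw [Finset.mem_range] at *
    omega
  have hzero : ∀ m ∈ Finset.range d, m ∉ Finset.range K → ∑ j ∈ Finset.Ico m K, t j = 0 := by
    intro m _ hm
    rw [Finset.mem_range, not_lt] at hm
    rw [Finset.Ico_eq_empty (by omega), Finset.sum_empty]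
  rw [← Finset.sum_subset hsub hzero]
  have step2 : ∀ r ∈ Finset.range K, ∑ j ∈ Finset.Ico r K, t j
      = ∑ j ∈ Finset.range K, if r ≤ j then t j else 0 := by
    intro r _
    rw [← Finset.sum_filter]
    congr 1
    ext m
    simp only [Finset.mem_filter, Finset.mem_range, Finset.mem_Ico]
    omega
  rw [Finset.sum_congr rfl step2, Finset.sum_comm]
  have step3 : ∀ j ∈ Finset.range K, (∑ r ∈ Finset.range K, if r ≤ j then t j else 0)
      = Y j - Y (j + 1) := by
    intro j hj
    rw [Finset.mem_range] at hj
    rw [← Finset.sum_filter]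
    have hfil : (Finset.range K).filter (fun r => r ≤ j) = Finset.range (j + 1) := by
      ext m
      simp only [Finset.mem_filter, Finset.mem_range]
      omega
    rw [hfil, Finset.sum_const, Finset.card_range, nsmul_eq_mul, ht]
    push_cast
    rw [mul_div_cancel₀]
    positivity
  rw [Finset.sum_congr rfl step3, Finset.sum_range_sub' Y K]
  have hY0 : Y 0 = x (π ⟨0, hd⟩) := by
    rw [hY, Yfun, dif_pos ⟨by omega, hd⟩]
  have hYK : Y K = x (π ⟨0, hd⟩) - δ := by
    rw [hY, Yfun, dif_neg (by omega)]
  rw [hY0, hYK]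
  field_simp
  ring

end PLSAux

/-- The value of `PLSoftMax^δ(x)` does not depend on the choice of sorting permutation;
hence `PLSoftMax^δ` is a well-defined function `ℝ^d → Δ_{d−1}`, and it is continuous. -/
theorem plsoftmax_well_defined_continuous (d : ℕ) (hd : 1 ≤ d) (δ : ℝ) (hδ : 0 < δ) :
    (∀ (x : Fin d → ℝ) (π π' : Equiv.Perm (Fin d)),
        Sorts x π → Sorts x π' → PLSoftMax δ x π = PLSoftMax δ x π') ∧
    (∀ g : (Fin d → ℝ) → Fin d → ℝ,
        (∀ x, ∃ π : Equiv.Perm (Fin d), Sorts x π ∧ g x = PLSoftMax δ x π) →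
        Continuous g ∧ ∀ x, (∀ i, 0 ≤ g x i) ∧ ∑ i, g x i = 1) := by
  have hd0 : 0 < d := hd
  constructor
  · intro x π π' h h'
    rw [PLSAux.plsoftmax_eq_F hδ hd0 h, PLSAux.plsoftmax_eq_F hδ hd0 h']
  · intro g hg
    have hgF : g = fun x => PLSAux.Ffun hd0 δ x := by
      funext x
      obtain ⟨π, hπ, hgx⟩ := hg x
      rw [hgx, PLSAux.plsoftmax_eq_F hδ hd0 hπ]
    refine ⟨by rw [hgF]; exact PLSAux.continuous_F hd0 δ, fun x => ?_⟩
    obtain ⟨π, hπ, hgx⟩ := hg x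
    rw [hgx]
    exact ⟨PLSAux.plsoftmax_nonneg hδ hd0 hπ, PLSAux.plsoftmax_sum hδ hd0⟩
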